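/- For k ∈ ℕ define S(k) := √(2^k)·∑_{i=1}^{2^k − 1} 1/√i. Then for every integer k ≥ 1, S(k) − 2·S(k−1) ≥ √(2^k)·(1 − 1/√2). -/

import Mathlib

open Finset Real

lemma aux_sum_bound (n : ℕ) :
    Real.sqrt 2 * (∑ i ∈ Finset.Icc 1 n, 1 / Real.sqrt (i:ℝ))
      + (1 - 1 / Real.sqrt 2) + 1 / Real.sqrt (2*((n:ℝ)+1))
    ≤ ∑ i ∈ Finset.Icc 1 (2*n+1), 1 / Real.sqrt (i:ℝ) := by
  induction n with
  | zero =>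
      norm_num
  | succ n ih =>
      have h1 : ∑ i ∈ Finset.Icc 1 (n+1), 1 / Real.sqrt (i:ℝ)
          = (∑ i ∈ Finset.Icc 1 n, 1 / Real.sqrt (i:ℝ)) + 1 / Real.sqrt ((n:ℝ)+1) := by
        rw [Finset.sum_Icc_succ_top (by omega : 1 ≤ n+1)]
        push_cast; ring
      have h2 : ∑ i ∈ Finset.Icc 1 (2*(n+1)+1), 1 / Real.sqrt (i:ℝ)
          = (∑ i ∈ Finset.Icc 1 (2*n+1), 1 / Real.sqrt (i:ℝ))
            + 1 / Real.sqrt (2*(n:ℝ)+2) + 1 / Real.sqrt (2*(n:ℝ)+3) := by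
        have e : 2*(n+1)+1 = (2*n+1+1)+1 := by omega
        rw [e, Finset.sum_Icc_succ_top (by omega : (1:ℕ) ≤ 2*n+1+1+1),
            Finset.sum_Icc_succ_top (by omega : (1:ℕ) ≤ 2*n+1+1)]
        push_cast; simp only [one_div]; ring
      rw [h1, h2]
      have hs : Real.sqrt (2*((n:ℝ)+1)) = Real.sqrt 2 * Real.sqrt ((n:ℝ)+1) :=
        Real.sqrt_mul (by norm_num) _
      have hnp : (0:ℝ) < Real.sqrt ((n:ℝ)+1) := Real.sqrt_pos.mpr (by positivity)
      have hs2 : (0:ℝ) < Real.sqrt 2 := Real.sqrt_pos.mpr (by norm_num)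
      have hmul : Real.sqrt 2 * Real.sqrt 2 = 2 := Real.mul_self_sqrt (by norm_num)
      have h4 : 2 * ((n:ℝ)+1) = 2*(n:ℝ)+2 := by ring
      have key : Real.sqrt 2 * (1 / Real.sqrt ((n:ℝ)+1)) = 2 * (1 / Real.sqrt (2*(n:ℝ)+2)) := by
        rw [← h4, hs]; field_simp; nlinarith [hmul]
      have h3 : 1 / Real.sqrt (2*(n:ℝ)+4) ≤ 1 / Real.sqrt (2*(n:ℝ)+3) := by
        apply one_div_le_one_div_of_le
        · exact Real.sqrt_pos.mpr (by positivity)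
        · exact Real.sqrt_le_sqrt (by linarith)
      have h5 : (2:ℝ)*(((n:ℕ)+1:ℕ):ℝ)+2 = 2*(n:ℝ)+4 := by push_cast; ring
      have h6 : (2:ℝ)*((((n:ℕ)+1:ℕ):ℝ)+1) = 2*(n:ℝ)+4 := by push_cast; ring
      rw [h6]
      rw [h4] at ih
      have hdist : Real.sqrt 2 * ((∑ i ∈ Finset.Icc 1 n, 1 / Real.sqrt (i:ℝ))
            + 1 / Real.sqrt ((n:ℝ)+1))
          = Real.sqrt 2 * (∑ i ∈ Finset.Icc 1 n, 1 / Real.sqrt (i:ℝ))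
            + Real.sqrt 2 * (1 / Real.sqrt ((n:ℝ)+1)) := mul_add _ _ _
      linarith [ih, key, h3, hdist]

theorem S_difference_lower_bound (S : ℕ → ℝ)
    (hS : ∀ k : ℕ, S k = Real.sqrt (2 ^ k) *
      ∑ i ∈ (Finset.Icc 1 (2 ^ k - 1) : Finset ℕ), 1 / Real.sqrt (i : ℝ)) :
    ∀ k : ℕ, 1 ≤ k →
      S k - 2 * S (k - 1) ≥ Real.sqrt (2 ^ k) * (1 - 1 / Real.sqrt 2) := by
  intro k hk
  obtain ⟨j, rfl⟩ : ∃ j, k = j + 1 := ⟨k-1, by omega⟩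
  rw [hS, hS]
  simp only [Nat.add_sub_cancel]
  obtain ⟨n, hn⟩ : ∃ n, 2^j = n + 1 := ⟨2^j - 1, by have := Nat.one_le_two_pow (n := j); omega⟩
  have e1 : 2 ^ (j+1) - 1 = 2*n+1 := by omega
  have e2 : 2 ^ j - 1 = n := by omega
  rw [e1, e2]
  have hc2 : ((2:ℝ) ^ j) = (n:ℝ)+1 := by exact_mod_cast congrArg (Nat.cast : ℕ → ℝ) hn
  have hc1 : ((2:ℝ) ^ (j+1)) = 2 * ((n:ℝ)+1) := by rw [pow_succ]; rw [hc2]; ring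
  rw [hc1, hc2]
  set A := ∑ i ∈ Finset.Icc 1 n, 1 / Real.sqrt (i:ℝ) with hA
  set B := ∑ i ∈ Finset.Icc 1 (2*n+1), 1 / Real.sqrt (i:ℝ) with hB
  have haux := aux_sum_bound n
  rw [← hA, ← hB] at haux
  have hsq : Real.sqrt (2*((n:ℝ)+1)) = Real.sqrt 2 * Real.sqrt ((n:ℝ)+1) :=
    Real.sqrt_mul (by norm_num) _
  have hpos : (0:ℝ) ≤ Real.sqrt (2*((n:ℝ)+1)) := Real.sqrt_nonneg _
  have hposstrict : (0:ℝ) < Real.sqrt (2*((n:ℝ)+1)) := Real.sqrt_pos.mpr (by positivity)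
  have hmul : Real.sqrt 2 * Real.sqrt 2 = 2 := Real.mul_self_sqrt (by norm_num)
  have h2s : Real.sqrt (2*((n:ℝ)+1)) * Real.sqrt 2 = 2 * Real.sqrt ((n:ℝ)+1) := by
    rw [hsq, mul_right_comm, hmul]
  have hextra : Real.sqrt (2*((n:ℝ)+1)) * (1 / Real.sqrt (2*((n:ℝ)+1))) = 1 := by
    field_simp
  have hB' : Real.sqrt (2*((n:ℝ)+1)) * B
      ≥ Real.sqrt (2*((n:ℝ)+1)) * (Real.sqrt 2 * A + (1 - 1/Real.sqrt 2)
          + 1 / Real.sqrt (2*((n:ℝ)+1))) := by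
    apply mul_le_mul_of_nonneg_left _ hpos
    linarith [haux]
  have hd : Real.sqrt (2*((n:ℝ)+1)) * (Real.sqrt 2 * A + (1 - 1/Real.sqrt 2)
          + 1 / Real.sqrt (2*((n:ℝ)+1)))
      = 2 * Real.sqrt ((n:ℝ)+1) * A
        + Real.sqrt (2*((n:ℝ)+1)) * (1 - 1/Real.sqrt 2) + 1 := by
    rw [mul_add, mul_add, ← mul_assoc, h2s, hextra]
  nlinarith [hB', hd]
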